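/- Let A be an n×n irreducible nonnegative real matrix with period p. Then for every even integer k with 0 ≤ k ≤ 2p−1, e^{iπk/p}·sp(A) = sp(A); consequently, for every odd integer k with 0 ≤ k ≤ 2p−1, e^{iπk/p}·sp(A) = e^{iπ/p}·sp(A). -/

import Mathlib

open Matrix

/-- The spectrum of a real square matrix: the multiset of complex roots of its
characteristic polynomial (eigenvalues with multiplicity). -/
noncomputable def spec {ι : Type*} [Fintype ι] [DecidableEq ι] (M : Matrix ι ι ℝ) : Multiset ℂ :=
  (M.map Complex.ofReal).charpoly.roots

/-- The spectral radius: the maximum of the moduli of the complex eigenvalues. -/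
noncomputable def specRadius {ι : Type*} [Fintype ι] [DecidableEq ι] (M : Matrix ι ι ℝ) : ℝ :=
  sSup ((fun z : ℂ => ‖z‖) '' {z | z ∈ spec M})

/-- Entrywise absolute value of a real matrix. -/
def matAbs {ι : Type*} (M : Matrix ι ι ℝ) : Matrix ι ι ℝ := fun i j => |M i j|

/-- A walk of length `k` from `i` to `j` in the digraph of `A`
(arcs are the pairs with nonzero entry). -/
def HasWalk {ι : Type*} (A : Matrix ι ι ℝ) (i j : ι) (k : ℕ) : Prop :=
  ∃ f : ℕ → ι, f 0 = i ∧ f k = j ∧ ∀ t < k, A (f t) (f (t + 1)) ≠ 0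

/-- `A` is irreducible: its digraph is strongly connected. -/
def MatIrreducible {ι : Type*} (A : Matrix ι ι ℝ) : Prop :=
  ∀ i j : ι, ∃ k, HasWalk A i j k

/-- `p` is the period of `A`: the gcd of the lengths of the closed walks of its digraph. -/
def IsPeriod {ι : Type*} (A : Matrix ι ι ℝ) (p : ℕ) : Prop :=
  (∀ k, 0 < k → (∃ i, HasWalk A i i k) → p ∣ k) ∧
  ∀ q : ℕ, (∀ k, 0 < k → (∃ i, HasWalk A i i k) → q ∣ k) → q ∣ p

/-- `B'` is `{-1,1}`-diagonally similar to `B`: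
`B' = Λ⁻¹ * B * Λ` for a diagonal matrix `Λ` with diagonal entries in `{-1,1}`. -/
def DiagSignSimilar {ι : Type*} [Fintype ι] [DecidableEq ι] (B B' : Matrix ι ι ℝ) : Prop :=
  ∃ d : ι → ℝ, (∀ i, d i = 1 ∨ d i = -1) ∧
    B' = (Matrix.diagonal d)⁻¹ * B * Matrix.diagonal d

open Polynomial

lemma hasWalk_trans {ι : Type*} {A : Matrix ι ι ℝ} {i j l : ι} {a b : ℕ}
    (h1 : HasWalk A i j a) (h2 : HasWalk A j l b) : HasWalk A i l (a + b) := by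
  obtain ⟨f, hf0, hfa, hf⟩ := h1
  obtain ⟨g, hg0, hgb, hg⟩ := h2
  refine ⟨fun t => if t < a then f t else g (t - a), ?_, ?_, ?_⟩
  · by_cases h : 0 < a
    · simp [h, hf0]
    · have ha : a = 0 := by omega
      subst ha
      simp [hg0, hfa.symm.trans hf0]
  · have : ¬ (a + b < a) := by omega
    simp [this, hgb]
  · intro t ht
    by_cases h : t < a
    · by_cases h' : t + 1 < a
      · simpa [h, h'] using hf t h
      · have ht1 : t + 1 = a := by omega
        have : g (t + 1 - a) = f (t + 1) := by
          rw [ht1]; simp [hg0, ← hfa]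
        have h2 : g 0 = f (t + 1) := by rw [hg0, ← hfa, ht1]
        simpa [h, h', this, h2] using hf t h
    · have h' : ¬ (t + 1 < a) := by omega
      have : t - a < b := by omega
      have := hg (t - a) this
      have harith : t - a + 1 = t + 1 - a := by omega
      simpa [h, h', harith] using this

lemma hasWalk_edge {ι : Type*} {A : Matrix ι ι ℝ} {i j : ι} (h : A i j ≠ 0) :
    HasWalk A i j 1 := by
  refine ⟨fun t => if t = 0 then i else j, by simp, by simp, ?_⟩
  intro t ht
  interval_cases t
  simpa using h

lemma eval_charpoly' {n : ℕ} (M : Matrix (Fin n) (Fin n) ℂ) (z : ℂ) :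
    M.charpoly.eval z = (z • (1 : Matrix (Fin n) (Fin n) ℂ) - M).det := by
  rw [Matrix.charpoly, ← Polynomial.coe_evalRingHom, RingHom.map_det]
  congr 1
  ext i j
  by_cases h : i = j <;>
    simp [charmatrix_apply, Matrix.diagonal_apply, h, Matrix.sub_apply, Matrix.one_apply,
      Matrix.smul_apply]

lemma roots_rot {n : ℕ} (M : Matrix (Fin n) (Fin n) ℂ) (s : ℂ) (hs : s ≠ 0)
    (hsim : ∀ z : ℂ, (z • (1 : Matrix (Fin n) (Fin n) ℂ) - s • M).det
      = (z • (1 : Matrix (Fin n) (Fin n) ℂ) - M).det) :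
    M.charpoly.roots.map (fun r => s * r) = M.charpoly.roots := by
  set q := M.charpoly with hq
  have hmon : q.Monic := M.charpoly_monic
  have hsplit : q.Splits := IsAlgClosed.splits q
  have hcard : Multiset.card q.roots = n := by
    rw [(Polynomial.splits_iff_card_roots).mp hsplit]
    simp [hq]
  have hprod : q = (q.roots.map fun r => X - C r).prod :=
    hsplit.eq_prod_roots_of_monic hmon
  have heval : ∀ z : ℂ, q.eval z = (q.roots.map fun r => z - r).prod := by
    intro z
    conv_lhs => rw [hprod]
    rw [Polynomial.eval_multiset_prod, Multiset.map_map]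
    simp
  have key : q = (q.roots.map fun r => X - C (s * r)).prod := by
    apply Polynomial.funext
    intro z
    have h1 : q.eval z = (z • (1 : Matrix (Fin n) (Fin n) ℂ) - s • M).det := by
      rw [eval_charpoly' M z, hsim z]
    have h2 : z • (1 : Matrix (Fin n) (Fin n) ℂ) - s • M
        = s • ((z / s) • (1 : Matrix (Fin n) (Fin n) ℂ) - M) := by
      rw [smul_sub, smul_smul, mul_div_cancel₀ _ hs]
    rw [h1, h2, Matrix.det_smul, ← eval_charpoly' M, ← hq, heval]
    rw [Polynomial.eval_multiset_prod, Multiset.map_map]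
    have : (s : ℂ) ^ (Fintype.card (Fin n)) = (q.roots.map fun _ => s).prod := by
      simp [Multiset.map_const', Multiset.prod_replicate, hcard]
    rw [this, ← Multiset.prod_map_mul]
    congr 1
    apply Multiset.map_congr rfl
    intro r _
    simp only [Function.comp_apply, eval_sub, eval_X, eval_C]
    field_simp
  conv_rhs => rw [key]
  have : (q.roots.map fun r => X - C (s * r))
      = ((q.roots.map fun r => s * r).map fun a => X - C a) := by
    rw [Multiset.map_map]; rfl
  rw [this, Polynomial.roots_multiset_prod_X_sub_C]

lemma spec_rot {n p : ℕ} (A : Matrix (Fin n) (Fin n) ℝ) (hirr : MatIrreducible A)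
    (hp : IsPeriod A p) (hp0 : 0 < p) :
    (spec A).map (fun z => Complex.exp (2 * Real.pi * Complex.I / p) * z) = spec A := by
  set ω : ℂ := Complex.exp (2 * Real.pi * Complex.I / p) with hω
  have hω0 : ω ≠ 0 := Complex.exp_ne_zero _
  have hpC : (p : ℂ) ≠ 0 := Nat.cast_ne_zero.2 hp0.ne'
  have hωp : ω ^ p = 1 := by
    rw [hω, ← Complex.exp_nat_mul]
    have : (p : ℂ) * (2 * Real.pi * Complex.I / p) = 2 * Real.pi * Complex.I := by
      field_simp
    rw [this, Complex.exp_two_pi_mul_I]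
  have hωcong : ∀ a b : ℕ, (a : ZMod p) = (b : ZMod p) → ω ^ a = ω ^ b := by
    intro a b hab
    have h := (ZMod.natCast_eq_natCast_iff' a b p).1 hab
    have hmod : ∀ c : ℕ, ω ^ c = ω ^ (c % p) := by
      intro c
      conv_lhs => rw [← Nat.div_add_mod c p]
      rw [pow_add, pow_mul, hωp, one_pow, one_mul]
    rw [hmod a, hmod b, h]
  rcases Nat.eq_zero_or_pos n with hn | hn
  · subst hn
    have : spec A = 0 := by
      simp [spec, Matrix.charpoly, Matrix.det_isEmpty]
    simp [this]
  · set i0 : Fin n := ⟨0, hn⟩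
    have hK : ∀ i : Fin n, ∃ m, HasWalk A i0 i m := fun i => hirr i0 i
    choose K hKw using hK
    have walk_unique : ∀ (i : Fin n) (a : ℕ), HasWalk A i0 i a →
        ((a : ZMod p) = (K i : ZMod p)) := by
      intro i a ha
      obtain ⟨b, hb⟩ := hirr i i0
      have key : ∀ x : ℕ, HasWalk A i0 i x → (x : ZMod p) = -(b : ZMod p) := by
        intro x hx
        have hcl : HasWalk A i0 i0 (x + b) := hasWalk_trans hx hb
        by_cases h0 : 0 < x + b
        · have hd : p ∣ x + b := hp.1 _ h0 ⟨i0, hcl⟩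
          have hz : ((x + b : ℕ) : ZMod p) = 0 :=
            (ZMod.natCast_eq_zero_iff _ _).2 hd
          push_cast at hz
          linear_combination hz
        · have hx0 : x = 0 := by omega
          have hb0 : b = 0 := by omega
          simp [hx0, hb0]
      rw [key a ha, key (K i) (hKw i)]
    set d : Fin n → ℂ := fun i => ω ^ (K i) with hd
    have hd0 : ∀ i, d i ≠ 0 := fun i => pow_ne_zero _ hω0
    have hedge : ∀ i j, A i j ≠ 0 → d j = d i * ω := by
      intro i j hij
      have hw : HasWalk A i0 j (K i + 1) := hasWalk_trans (hKw i) (hasWalk_edge hij)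
      have h1 := walk_unique j (K i + 1) hw
      have h2 := hωcong _ _ h1.symm
      simpa [hd, pow_succ] using h2
    set M : Matrix (Fin n) (Fin n) ℂ := A.map Complex.ofReal with hM
    have hMD : M * Matrix.diagonal d = Matrix.diagonal d * (ω • M) := by
      ext i j
      rw [Matrix.mul_diagonal, Matrix.diagonal_mul]
      by_cases h : A i j = 0
      · simp [hM, Matrix.map_apply, h]
      · rw [hedge i j h]
        simp only [hM, Matrix.map_apply, Matrix.smul_apply, smul_eq_mul]
        ring
    have hdet : IsUnit (Matrix.diagonal d).det := by
      rw [Matrix.det_diagonal]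
      exact (Finset.prod_ne_zero_iff.2 fun i _ => hd0 i).isUnit
    have hDinv : (Matrix.diagonal d)⁻¹ * Matrix.diagonal d = 1 :=
      Matrix.nonsing_inv_mul _ hdet
    have hsim : ∀ z : ℂ, (z • (1 : Matrix (Fin n) (Fin n) ℂ) - ω • M).det
        = (z • (1 : Matrix (Fin n) (Fin n) ℂ) - M).det := by
      intro z
      have h1 : z • (1 : Matrix (Fin n) (Fin n) ℂ) - ω • M
          = (Matrix.diagonal d)⁻¹ * (z • (1 : Matrix (Fin n) (Fin n) ℂ) - M)
            * Matrix.diagonal d := by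
        rw [Matrix.mul_sub, Matrix.sub_mul]
        congr 1
        · rw [Matrix.mul_smul, Matrix.mul_one, Matrix.smul_mul, hDinv]
        · symm
          calc (Matrix.diagonal d)⁻¹ * M * Matrix.diagonal d
              = (Matrix.diagonal d)⁻¹ * (M * Matrix.diagonal d) := by
                rw [Matrix.mul_assoc]
            _ = (Matrix.diagonal d)⁻¹ * (Matrix.diagonal d * (ω • M)) := by rw [hMD]
            _ = ω • M := by rw [← Matrix.mul_assoc, hDinv, Matrix.one_mul]
      have hdne : (Matrix.diagonal d).det ≠ 0 := hdet.ne_zero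
      rw [h1, Matrix.det_mul, Matrix.det_mul, Matrix.det_nonsing_inv,
        Ring.inverse_eq_inv, mul_assoc, mul_comm _ (Matrix.diagonal d).det,
        ← mul_assoc, inv_mul_cancel₀ hdne, one_mul]
    exact roots_rot M ω hω0 hsim

theorem stmt_12 {n : ℕ} (A : Matrix (Fin n) (Fin n) ℝ)
    (hnn : ∀ i j, 0 ≤ A i j) (hirr : MatIrreducible A)
    (p : ℕ) (hp : IsPeriod A p) :
    (∀ k : ℕ, k ≤ 2 * p - 1 → Even k →
      (spec A).map (fun z => Complex.exp (Complex.I * Real.pi * k / p) * z) = spec A) ∧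
    (∀ k : ℕ, k ≤ 2 * p - 1 → Odd k →
      (spec A).map (fun z => Complex.exp (Complex.I * Real.pi * k / p) * z) =
        (spec A).map (fun z => Complex.exp (Complex.I * Real.pi / p) * z)) := by
  rcases Nat.eq_zero_or_pos p with hp0 | hp0
  · subst hp0
    constructor <;> intro k _ _ <;> simp
  · set ω : ℂ := Complex.exp (2 * Real.pi * Complex.I / p) with hω
    have hrotpow : ∀ m : ℕ, (spec A).map (fun z => ω ^ m * z) = spec A := by
      intro m
      induction m with
      | zero => simp
      | succ m ih =>
        have hsplitf : (fun z : ℂ => ω ^ (m + 1) * z)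
            = (fun z => ω * z) ∘ (fun z => ω ^ m * z) := by
          funext z
          simp only [Function.comp_apply, pow_succ]
          ring
        rw [hsplitf, ← Multiset.map_map, ih]
        exact spec_rot A hirr hp hp0
    constructor
    · rintro k - ⟨m, hm⟩
      subst hm
      have harg : Complex.I * (Real.pi : ℂ) * ((m + m : ℕ) : ℂ) / p
          = m * (2 * Real.pi * Complex.I / p) := by
        push_cast
        ring
      rw [harg, Complex.exp_nat_mul, ← hω]
      exact hrotpow m
    · rintro k - ⟨m, hm⟩
      subst hm
      have harg : Complex.I * (Real.pi : ℂ) * ((2 * m + 1 : ℕ) : ℂ) / p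
          = Complex.I * (Real.pi : ℂ) / p + m * (2 * Real.pi * Complex.I / p) := by
        push_cast
        ring
      rw [harg, Complex.exp_add, Complex.exp_nat_mul, ← hω]
      have hcomp : (fun z : ℂ => (Complex.exp (Complex.I * (Real.pi : ℂ) / p) * ω ^ m) * z)
          = (fun z => Complex.exp (Complex.I * (Real.pi : ℂ) / p) * z)
            ∘ (fun z => ω ^ m * z) := by
        funext z
        simp [mul_assoc]
      rw [hcomp, ← Multiset.map_map, hrotpow m]
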